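/- Let G have a unique maximum open packing U, with x ∈ U, some neighbor of x in U, and suppose there is exactly one open packing of G of size ρ°(G) − 1 not containing x. Let G' be obtained from G by appending two disjoint paths P₃ to x. Then G' has a unique maximum open packing and ρ°(G') = ρ°(G) + 3. -/

import Mathlib

variable {V : Type*}

/-- A set of vertices is an open packing if the open neighborhoods of distinct
vertices in it are pairwise disjoint. -/
def IsOpenPacking (G : SimpleGraph V) (S : Set V) : Prop :=
  S.Pairwise fun u v => Disjoint (G.neighborSet u) (G.neighborSet v)

/-- The open packing number: the maximum cardinality of an open packing. -/
noncomputable def openPackingNumber (G : SimpleGraph V) : ℕ :=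
  sSup {n | ∃ S : Finset V, IsOpenPacking G ↑S ∧ S.card = n}

/-- `U` is the unique maximum open packing of `G`. -/
def HasUniqueMaxOpenPacking (G : SimpleGraph V) (U : Finset V) : Prop :=
  IsOpenPacking G ↑U ∧ U.card = openPackingNumber G ∧
    ∀ S : Finset V, IsOpenPacking G ↑S → S.card = openPackingNumber G → S = U

/-- The graph obtained from `G` by appending two disjoint paths on 3 new
vertices each to the vertex `x`. -/
def appendTwoP3 (G : SimpleGraph V) (x : V) : SimpleGraph (V ⊕ (Fin 3 ⊕ Fin 3)) :=
  SimpleGraph.fromRel fun a b => match a, b with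
    | Sum.inl u, Sum.inl v => G.Adj u v
    | Sum.inl u, Sum.inr (Sum.inl i) => u = x ∧ (i : ℕ) = 0
    | Sum.inl u, Sum.inr (Sum.inr i) => u = x ∧ (i : ℕ) = 0
    | Sum.inr (Sum.inl i), Sum.inr (Sum.inl j) => (j : ℕ) = (i : ℕ) + 1
    | Sum.inr (Sum.inr i), Sum.inr (Sum.inr j) => (j : ℕ) = (i : ℕ) + 1
    | _, _ => False

open Sum

lemma isOpenPacking_iff' (G : SimpleGraph V) (S : Set V) :
    IsOpenPacking G S ↔ ∀ ⦃u⦄, u ∈ S → ∀ ⦃v⦄, v ∈ S → ∀ ⦃w⦄, G.Adj w u → G.Adj w v → u = v := by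
  constructor
  · intro h u hu v hv w hwu hwv
    by_contra hne
    exact Set.disjoint_left.mp (h hu hv hne) hwu.symm hwv.symm
  · intro h u hu v hv hne
    rw [Set.disjoint_left]
    intro w hwu hwv
    exact hne (h hu hv ((SimpleGraph.mem_neighborSet _ _ _).mp hwu).symm
      ((SimpleGraph.mem_neighborSet _ _ _).mp hwv).symm)

lemma openPacking_bddAbove [Fintype V] (G : SimpleGraph V) :
    BddAbove {n | ∃ S : Finset V, IsOpenPacking G ↑S ∧ S.card = n} := by
  refine ⟨Fintype.card V, fun n hn => ?_⟩
  obtain ⟨S, _, rfl⟩ := hn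
  exact S.card_le_univ

lemma le_openPackingNumber [Fintype V] {G : SimpleGraph V} {S : Finset V}
    (h : IsOpenPacking G ↑S) : S.card ≤ openPackingNumber G :=
  le_csSup (openPacking_bddAbove G) ⟨S, h, rfl⟩

lemma openPackingNumber_le [Fintype V] {G : SimpleGraph V} {n : ℕ}
    (h : ∀ S : Finset V, IsOpenPacking G ↑S → S.card ≤ n) : openPackingNumber G ≤ n := by
  refine csSup_le ⟨0, ∅, by simp [IsOpenPacking], rfl⟩ ?_
  rintro m ⟨S, hS, rfl⟩
  exact h S hS

lemma adj_ll {G : SimpleGraph V} {x u v : V} :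
    (appendTwoP3 G x).Adj (inl u) (inl v) ↔ G.Adj u v := by
  simp only [appendTwoP3, SimpleGraph.fromRel_adj]
  constructor
  · rintro ⟨_, h | h⟩; exact h; exact h.symm
  · intro h; exact ⟨by simpa using h.ne, Or.inl h⟩

lemma adj_l1 {G : SimpleGraph V} {x u : V} {i : Fin 3} :
    (appendTwoP3 G x).Adj (inl u) (inr (inl i)) ↔ u = x ∧ (i : ℕ) = 0 := by
  simp [appendTwoP3, SimpleGraph.fromRel_adj]

lemma adj_l2 {G : SimpleGraph V} {x u : V} {i : Fin 3} :
    (appendTwoP3 G x).Adj (inl u) (inr (inr i)) ↔ u = x ∧ (i : ℕ) = 0 := by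
  simp [appendTwoP3, SimpleGraph.fromRel_adj]

lemma adj_1l {G : SimpleGraph V} {x u : V} {i : Fin 3} :
    (appendTwoP3 G x).Adj (inr (inl i)) (inl u) ↔ u = x ∧ (i : ℕ) = 0 :=
  (SimpleGraph.adj_comm _ _ _).trans adj_l1

lemma adj_2l {G : SimpleGraph V} {x u : V} {i : Fin 3} :
    (appendTwoP3 G x).Adj (inr (inr i)) (inl u) ↔ u = x ∧ (i : ℕ) = 0 :=
  (SimpleGraph.adj_comm _ _ _).trans adj_l2

lemma adj_11 {G : SimpleGraph V} {x : V} {i j : Fin 3} :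
    (appendTwoP3 G x).Adj (inr (inl i)) (inr (inl j)) ↔
      (j : ℕ) = (i : ℕ) + 1 ∨ (i : ℕ) = (j : ℕ) + 1 := by
  simp only [appendTwoP3, SimpleGraph.fromRel_adj]
  constructor
  · rintro ⟨_, h⟩; exact h
  · intro h
    refine ⟨?_, h⟩
    rcases h with h | h <;> simp only [ne_eq, inr.injEq, inl.injEq] <;>
      intro hij <;> rw [hij] at h <;> omega

lemma adj_22 {G : SimpleGraph V} {x : V} {i j : Fin 3} :
    (appendTwoP3 G x).Adj (inr (inr i)) (inr (inr j)) ↔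
      (j : ℕ) = (i : ℕ) + 1 ∨ (i : ℕ) = (j : ℕ) + 1 := by
  simp only [appendTwoP3, SimpleGraph.fromRel_adj]
  constructor
  · rintro ⟨_, h⟩; exact h
  · intro h
    refine ⟨?_, h⟩
    rcases h with h | h <;> simp only [ne_eq, inr.injEq] <;>
      intro hij <;> rw [hij] at h <;> omega

lemma adj_12 {G : SimpleGraph V} {x : V} {i j : Fin 3} :
    ¬ (appendTwoP3 G x).Adj (inr (inl i)) (inr (inr j)) := by
  simp [appendTwoP3, SimpleGraph.fromRel_adj]

lemma adj_21 {G : SimpleGraph V} {x : V} {i j : Fin 3} :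
    ¬ (appendTwoP3 G x).Adj (inr (inr i)) (inr (inl j)) := by
  simp [appendTwoP3, SimpleGraph.fromRel_adj]

lemma fin3_card_le_two : ∀ R : Finset (Fin 3), (0 ∈ R → 2 ∈ R → False) → R.card ≤ 2 := by
  decide

lemma fin3_card_le_one : ∀ R : Finset (Fin 3), (1 : Fin 3) ∉ R →
    (0 ∈ R → 2 ∈ R → False) → R.card ≤ 1 := by decide

lemma fin3_eq_12 : ∀ R : Finset (Fin 3), (0 : Fin 3) ∉ R → R.card = 2 → R = {1, 2} := by
  decide

theorem stmt_6 [Fintype V] [DecidableEq V] (G : SimpleGraph V)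
    (U : Finset V) (hU : HasUniqueMaxOpenPacking G U)
    (x y : V) (hx : x ∈ U) (hy : y ∈ U) (hxy : G.Adj x y)
    (huniq : ∃! S : Finset V,
      IsOpenPacking G ↑S ∧ S.card = openPackingNumber G - 1 ∧ x ∉ S) :
    (∃ U' : Finset (V ⊕ (Fin 3 ⊕ Fin 3)),
      HasUniqueMaxOpenPacking (appendTwoP3 G x) U') ∧
    openPackingNumber (appendTwoP3 G x) = openPackingNumber G + 3 := by
  classical
  obtain ⟨hUp, hUc, hUu⟩ := hU
  set ρ := openPackingNumber G with hρdef
  have hρ1 : 1 ≤ ρ := hUc ▸ Finset.card_pos.mpr ⟨x, hx⟩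
  -- the unique (ρ-1)-packing avoiding x is U.erase x
  obtain ⟨S₀, hS₀, hS₀u⟩ := huniq
  have herase : IsOpenPacking G ↑(U.erase x) := hUp.mono (by
    intro a ha
    exact Finset.mem_coe.mpr (Finset.mem_of_mem_erase (Finset.mem_coe.mp ha)))
  have heraseCard : (U.erase x).card = ρ - 1 := by
    rw [Finset.card_erase_of_mem hx, hUc]
  have hS₀eq : S₀ = U.erase x := (hS₀u (U.erase x) ⟨herase, heraseCard, Finset.notMem_erase x U⟩).symm
  -- the candidate maximum open packing of G'
  set P : Finset (V ⊕ (Fin 3 ⊕ Fin 3)) :=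
    {inr (inl 1), inr (inl 2), inr (inr 1), inr (inr 2)} with hPdef
  set U' : Finset (V ⊕ (Fin 3 ⊕ Fin 3)) := (U.erase x).image inl ∪ P with hU'def
  have hP := (isOpenPacking_iff' G _).mp hUp
  -- U' is an open packing of G'
  have hU'p : IsOpenPacking (appendTwoP3 G x) ↑U' := by
    rw [isOpenPacking_iff']
    intro u hu v hv w hwu hwv
    simp only [hU'def, hPdef, Finset.coe_union, Set.mem_union, Finset.coe_image,
      Set.mem_image, Finset.mem_coe, Finset.coe_insert, Set.mem_insert_iff,
      Finset.coe_singleton, Set.mem_singleton_iff] at hu hv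
    rcases hu with ⟨u', hu', rfl⟩ | rfl | rfl | rfl | rfl <;>
      rcases hv with ⟨v', hv', rfl⟩ | rfl | rfl | rfl | rfl <;>
      rcases w with w' | ⟨i | i⟩ <;>
      try fin_cases i
    all_goals try simp only [adj_ll, adj_l1, adj_l2, adj_1l, adj_2l, adj_11, adj_12,
      adj_21, adj_22, Fin.isValue, Fin.val_zero, Fin.val_one, Fin.val_two,
      show ((2 : Fin 3) : ℕ) = 2 from rfl, show ((1 : Fin 3) : ℕ) = 1 from rfl,
      show ((0 : Fin 3) : ℕ) = 0 from rfl] at hwu hwv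
    all_goals try rfl
    all_goals try omega
    all_goals try (exact absurd hwu.1 (Finset.ne_of_mem_erase hu'))
    all_goals try (exact absurd hwv.1 (Finset.ne_of_mem_erase hv'))
    · exact congrArg inl
        (hP (Finset.mem_coe.mpr (Finset.mem_of_mem_erase hu'))
          (Finset.mem_coe.mpr (Finset.mem_of_mem_erase hv')) hwu hwv)
  have hU'c : U'.card = ρ + 3 := by
    have hdisj : Disjoint ((U.erase x).image inl) P := by
      rw [Finset.disjoint_left]
      rintro a ha hb
      simp only [Finset.mem_image] at ha
      obtain ⟨a', -, rfl⟩ := ha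
      simp [hPdef] at hb
    have hP4 : P.card = 4 := by
      rw [hPdef, Finset.card_insert_of_notMem (by simp), Finset.card_insert_of_notMem (by simp),
        Finset.card_insert_of_notMem (by simp), Finset.card_singleton]
    rw [hU'def, Finset.card_union_of_disjoint hdisj,
      Finset.card_image_of_injective _ inl_injective, heraseCard, hP4]
    omega
  -- key bound and uniqueness
  have key : ∀ S' : Finset (V ⊕ (Fin 3 ⊕ Fin 3)), IsOpenPacking (appendTwoP3 G x) ↑S' →
      S'.card ≤ ρ + 3 ∧ (S'.card = ρ + 3 → S' = U') := by
    intro S' hS'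
    have hS := (isOpenPacking_iff' _ _).mp hS'
    set T := S'.toLeft with hTdef
    set R1 := S'.toRight.toLeft with hR1def
    set R2 := S'.toRight.toRight with hR2def
    have hcards : T.card + (R1.card + R2.card) = S'.card := by
      rw [hTdef, hR1def, hR2def, Finset.card_toLeft_add_card_toRight,
        Finset.card_toLeft_add_card_toRight]
    have hmT : ∀ {v : V}, v ∈ T ↔ inl v ∈ S' := fun {v} => Finset.mem_toLeft
    have hmR1 : ∀ {i : Fin 3}, i ∈ R1 ↔ inr (inl i) ∈ S' := by
      intro i; rw [hR1def, Finset.mem_toLeft, Finset.mem_toRight]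
    have hmR2 : ∀ {i : Fin 3}, i ∈ R2 ↔ inr (inr i) ∈ S' := by
      intro i; rw [hR2def, Finset.mem_toRight, Finset.mem_toRight]
    have hmemS : ∀ {a}, a ∈ S' → a ∈ (↑S' : Set (V ⊕ (Fin 3 ⊕ Fin 3))) :=
      fun {a} h => Finset.mem_coe.mpr h
    have hT : IsOpenPacking G ↑T := by
      rw [isOpenPacking_iff']
      intro u hu v hv w hwu hwv
      exact inl_injective (hS (hmemS (hmT.mp (Finset.mem_coe.mp hu)))
        (hmemS (hmT.mp (Finset.mem_coe.mp hv))) (w := inl w)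
        (adj_ll.mpr hwu) (adj_ll.mpr hwv))
    have hTle : T.card ≤ ρ := le_openPackingNumber hT
    have c1 : (0 : Fin 3) ∈ R1 → (2 : Fin 3) ∈ R1 → False := by
      intro h0 h2
      have := hS (hmemS (hmR1.mp h0)) (hmemS (hmR1.mp h2)) (w := inr (inl 1))
        (adj_11.mpr (by decide)) (adj_11.mpr (by decide))
      simp at this
    have c2 : (0 : Fin 3) ∈ R2 → (2 : Fin 3) ∈ R2 → False := by
      intro h0 h2
      have := hS (hmemS (hmR2.mp h0)) (hmemS (hmR2.mp h2)) (w := inr (inr 1))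
        (adj_22.mpr (by decide)) (adj_22.mpr (by decide))
      simp at this
    have hR1le : R1.card ≤ 2 := fin3_card_le_two R1 c1
    have hR2le : R2.card ≤ 2 := fin3_card_le_two R2 c2
    by_cases hxl : inl x ∈ S'
    · -- x present: each path contributes at most 1
      have hb1 : (1 : Fin 3) ∉ R1 := by
        intro h1
        have := hS (hmemS hxl) (hmemS (hmR1.mp h1)) (w := inr (inl 0))
          (adj_1l.mpr ⟨rfl, by decide⟩) (adj_11.mpr (by decide))
        simp at this
      have hb2 : (1 : Fin 3) ∉ R2 := by
        intro h1
        have := hS (hmemS hxl) (hmemS (hmR2.mp h1)) (w := inr (inr 0))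
          (adj_2l.mpr ⟨rfl, by decide⟩) (adj_22.mpr (by decide))
        simp at this
      have h1le : R1.card ≤ 1 := fin3_card_le_one R1 hb1 c1
      have h2le : R2.card ≤ 1 := fin3_card_le_one R2 hb2 c2
      constructor
      · omega
      · intro hc; omega
    · -- x absent
      have hTlt : T.card ≤ ρ - 1 := by
        by_contra h
        have hTc : T.card = ρ := by omega
        have := hUu T hT hTc
        exact hxl (hmT.mp (this ▸ hx))
      constructor
      · omega
      · intro hcard
        have hTc : T.card = ρ - 1 := by omega
        have hR1c : R1.card = 2 := by omega
        have hR2c : R2.card = 2 := by omega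
        have hT0 : T = U.erase x := by
          rw [← hS₀eq]
          exact hS₀u T ⟨hT, hTc, fun hxT => hxl (hmT.mp hxT)⟩
        have hyT : inl y ∈ S' := by
          refine hmT.mp ?_
          rw [hT0]
          exact Finset.mem_erase.mpr ⟨Ne.symm hxy.ne, hy⟩
        have h01 : (0 : Fin 3) ∉ R1 := by
          intro h0
          have := hS (hmemS hyT) (hmemS (hmR1.mp h0)) (w := inl x)
            (adj_ll.mpr hxy) (adj_l1.mpr ⟨rfl, by decide⟩)
          simp at this
        have h02 : (0 : Fin 3) ∉ R2 := by
          intro h0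
          have := hS (hmemS hyT) (hmemS (hmR2.mp h0)) (w := inl x)
            (adj_ll.mpr hxy) (adj_l2.mpr ⟨rfl, by decide⟩)
          simp at this
        have hR1eq : R1 = {1, 2} := fin3_eq_12 R1 h01 hR1c
        have hR2eq : R2 = {1, 2} := fin3_eq_12 R2 h02 hR2c
        ext a
        rcases a with v | (i | i)
        · rw [← hmT, hT0]
          simp only [hU'def, hPdef, Finset.mem_union, Finset.mem_image, Finset.mem_insert,
            Finset.mem_singleton]
          constructor
          · intro h; exact Or.inl ⟨v, h, rfl⟩
          · rintro (⟨a, ha, h⟩ | h | h | h | h)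
            · exact (inl_injective h) ▸ ha
            · cases h
            · cases h
            · cases h
            · cases h
        · rw [← hmR1, hR1eq]
          simp only [hU'def, hPdef, Finset.mem_union, Finset.mem_image, Finset.mem_insert,
            Finset.mem_singleton]
          constructor
          · rintro (rfl | rfl)
            · exact Or.inr (Or.inl rfl)
            · exact Or.inr (Or.inr (Or.inl rfl))
          · rintro (⟨a, ha, h⟩ | h | h | h | h)
            · cases h
            · injection h with h; injection h with h; exact Or.inl h
            · injection h with h; injection h with h; exact Or.inr h
            · injection h with h; cases h
            · injection h with h; cases h
        · rw [← hmR2, hR2eq]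
          simp only [hU'def, hPdef, Finset.mem_union, Finset.mem_image, Finset.mem_insert,
            Finset.mem_singleton]
          constructor
          · rintro (rfl | rfl)
            · exact Or.inr (Or.inr (Or.inr (Or.inl rfl)))
            · exact Or.inr (Or.inr (Or.inr (Or.inr rfl)))
          · rintro (⟨a, ha, h⟩ | h | h | h | h)
            · cases h
            · injection h with h; cases h
            · injection h with h; cases h
            · injection h with h; injection h with h; exact Or.inl h
            · injection h with h; injection h with h; exact Or.inr h
  have hρ' : openPackingNumber (appendTwoP3 G x) = ρ + 3 := by
    refine le_antisymm (openPackingNumber_le fun S hSp => (key S hSp).1) ?_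
    rw [← hU'c]
    exact le_openPackingNumber hU'p
  refine ⟨⟨U', hU'p, by rw [hρ', hU'c], fun S hSp hSc => (key S hSp).2 (by rw [← hρ', hSc])⟩, hρ'⟩
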